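/- Let X be a pointed metric space. A sequence in Lip₀(X) converges to zero in the topology τ_γ if and only if it is bounded in the Lipschitz norm and converges to zero in the compact-open topology τ₀. -/

import Mathlib

open Filter Topology Set Pointwise

set_option linter.unusedSectionVars false
set_option linter.unusedVariables false

noncomputable section

namespace LipApprox

variable (X : Type*) [MetricSpace X] (x₀ : X)
variable (F : Type*) [NormedAddCommGroup F] [NormedSpace ℝ F]

/-- The Lipschitz maps `X → F` vanishing at the base point, as a submodule of `X → F`. -/
def lip0Submodule : Submodule ℝ (X → F) where
  carrier := {f | (∃ K, LipschitzWith K f) ∧ f x₀ = 0}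
  add_mem' := by
    rintro f g ⟨⟨Kf, hf⟩, hf0⟩ ⟨⟨Kg, hg⟩, hg0⟩
    exact ⟨⟨Kf + Kg, hf.add hg⟩, by simp [hf0, hg0]⟩
  zero_mem' := ⟨⟨0, LipschitzWith.const 0⟩, rfl⟩
  smul_mem' := by
    rintro c f ⟨⟨K, hf⟩, hf0⟩
    exact ⟨⟨‖c‖₊ * K, (lipschitzWith_smul c).comp hf⟩, by simp [hf0]⟩

/-- The space `Lip₀(X, F)` of Lipschitz maps from `X` to `F` vanishing at the base point. -/
def lip0 : Type _ := ↥(lip0Submodule X x₀ F)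

instance : AddCommGroup (lip0 X x₀ F) :=
  inferInstanceAs (AddCommGroup ↥(lip0Submodule X x₀ F))

instance : Module ℝ (lip0 X x₀ F) :=
  inferInstanceAs (Module ℝ ↥(lip0Submodule X x₀ F))

variable {X x₀ F}

/-- The underlying function of an element of `Lip₀(X, F)`. -/
def toFun' (f : lip0 X x₀ F) : X → F := f.1

lemma exists_lip (f : lip0 X x₀ F) : ∃ K, LipschitzWith K (toFun' f) := f.2.1

lemma apply_base (f : lip0 X x₀ F) : toFun' f x₀ = 0 := f.2.2

lemma toFun'_add (f g : lip0 X x₀ F) : toFun' (f + g) = toFun' f + toFun' g := rfl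
lemma toFun'_neg (f : lip0 X x₀ F) : toFun' (-f) = -toFun' f := rfl
lemma toFun'_smul (c : ℝ) (f : lip0 X x₀ F) : toFun' (c • f) = c • toFun' f := rfl
lemma toFun'_zero : toFun' (0 : lip0 X x₀ F) = 0 := rfl

variable (X x₀ F) in
/-- The Lipschitz norm of an element of `Lip₀(X, F)`. -/
def lipNorm (f : lip0 X x₀ F) : ℝ :=
  ⨆ p : X × X, ‖toFun' f p.1 - toFun' f p.2‖ / dist p.1 p.2

lemma ratio_le (f : lip0 X x₀ F) {K : NNReal} (hK : LipschitzWith K (toFun' f))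
    (p : X × X) : ‖toFun' f p.1 - toFun' f p.2‖ / dist p.1 p.2 ≤ K := by
  rcases eq_or_ne p.1 p.2 with h | h
  · simp [h]
  · rw [div_le_iff₀ (dist_pos.2 h), ← dist_eq_norm]
    exact hK.dist_le_mul p.1 p.2

lemma bddAbove_ratio (f : lip0 X x₀ F) :
    BddAbove (Set.range fun p : X × X =>
      ‖toFun' f p.1 - toFun' f p.2‖ / dist p.1 p.2) := by
  obtain ⟨K, hK⟩ := exists_lip f
  exact ⟨K, by rintro r ⟨p, rfl⟩; exact ratio_le f hK p⟩

lemma nonempty_pairs (x₀ : X) : Nonempty (X × X) := ⟨(x₀, x₀)⟩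

lemma ratio_le_lipNorm (f : lip0 X x₀ F) (p : X × X) :
    ‖toFun' f p.1 - toFun' f p.2‖ / dist p.1 p.2 ≤ lipNorm X x₀ F f :=
  le_ciSup (bddAbove_ratio f) p

lemma lipNorm_nonneg (f : lip0 X x₀ F) : 0 ≤ lipNorm X x₀ F f := by
  have := ratio_le_lipNorm (x₀ := x₀) f (x₀, x₀)
  simpa using this

lemma norm_sub_le_lipNorm (f : lip0 X x₀ F) (x y : X) :
    ‖toFun' f x - toFun' f y‖ ≤ lipNorm X x₀ F f * dist x y := by
  rcases eq_or_ne x y with rfl | h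
  · simp
  · have := ratio_le_lipNorm (x₀ := x₀) f (x, y)
    rw [div_le_iff₀ (dist_pos.2 h)] at this
    simpa using this

instance : NormedAddCommGroup (lip0 X x₀ F) :=
  AddGroupNorm.toNormedAddCommGroup
    { toFun := lipNorm X x₀ F
      map_zero' := by
        haveI : Nonempty (X × X) := nonempty_pairs x₀
        have h0 : ∀ p : X × X,
            ‖toFun' (0 : lip0 X x₀ F) p.1 - toFun' (0 : lip0 X x₀ F) p.2‖ /
              dist p.1 p.2 = 0 := by
          intro p; rw [toFun'_zero]; simp
        simp only [lipNorm, h0, ciSup_const]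
      add_le' := by
        intro f g
        haveI : Nonempty (X × X) := nonempty_pairs x₀
        apply ciSup_le
        intro p
        rcases eq_or_ne p.1 p.2 with h | h
        · simp only [h, dist_self, div_zero]
          exact add_nonneg (lipNorm_nonneg f) (lipNorm_nonneg g)
        · have hnum : ‖toFun' (f + g) p.1 - toFun' (f + g) p.2‖ ≤
              ‖toFun' f p.1 - toFun' f p.2‖ + ‖toFun' g p.1 - toFun' g p.2‖ := by
            rw [toFun'_add, Pi.add_apply, Pi.add_apply, add_sub_add_comm]
            exact norm_add_le _ _
          calc ‖toFun' (f + g) p.1 - toFun' (f + g) p.2‖ / dist p.1 p.2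
              ≤ (‖toFun' f p.1 - toFun' f p.2‖ +
                  ‖toFun' g p.1 - toFun' g p.2‖) / dist p.1 p.2 := by gcongr
            _ = ‖toFun' f p.1 - toFun' f p.2‖ / dist p.1 p.2 +
                  ‖toFun' g p.1 - toFun' g p.2‖ / dist p.1 p.2 := add_div _ _ _
            _ ≤ lipNorm X x₀ F f + lipNorm X x₀ F g :=
                add_le_add (ratio_le_lipNorm f p) (ratio_le_lipNorm g p)
      neg' := by
        intro f
        simp only [lipNorm]
        congr 1
        funext p
        congr 1
        rw [toFun'_neg, Pi.neg_apply, Pi.neg_apply, neg_sub_neg, norm_sub_rev]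
      eq_zero_of_map_eq_zero' := by
        intro f hf
        have hzero : ∀ x : X, toFun' f x = 0 := by
          intro x
          rcases eq_or_ne x x₀ with h | h
          · rw [h]; exact apply_base f
          · have hf' : lipNorm X x₀ F f = 0 := hf
            have h1 := ratio_le_lipNorm (x₀ := x₀) f (x, x₀)
            rw [hf', div_le_iff₀ (dist_pos.2 h), zero_mul] at h1
            have h2 : toFun' f x - toFun' f x₀ = 0 := by
              simpa using norm_le_zero_iff.1 h1
            have h3 := apply_base f
            rw [h3, sub_zero] at h2
            exact h2
        exact Subtype.ext (funext hzero) }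

lemma lip0_norm_def (f : lip0 X x₀ F) : ‖f‖ = lipNorm X x₀ F f := rfl

instance : NormedSpace ℝ (lip0 X x₀ F) where
  norm_smul_le c f := by
    haveI : Nonempty (X × X) := nonempty_pairs x₀
    rw [lip0_norm_def, lip0_norm_def, lipNorm]
    apply ciSup_le
    intro p
    have h1 : toFun' (c • f) p.1 - toFun' (c • f) p.2 =
        c • (toFun' f p.1 - toFun' f p.2) := by
      rw [toFun'_smul, Pi.smul_apply, Pi.smul_apply, smul_sub]
    rw [h1, norm_smul]
    rcases eq_or_ne p.1 p.2 with h | h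
    · simp only [h, dist_self, div_zero]
      exact mul_nonneg (norm_nonneg c) (lipNorm_nonneg f)
    · rw [mul_div_assoc]
      exact mul_le_mul_of_nonneg_left (ratio_le_lipNorm (x₀ := x₀) f p) (norm_nonneg c)

variable (X x₀ F)

/-- Elements of `Lip₀(X, F)` as continuous maps. -/
def toCM (f : lip0 X x₀ F) : C(X, F) :=
  ⟨toFun' f, by
    obtain ⟨K, hK⟩ := exists_lip f
    exact hK.continuous⟩

/-- The compact-open topology `τ₀` on `Lip₀(X, F)`. -/
def tau0 : TopologicalSpace (lip0 X x₀ F) :=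
  TopologicalSpace.induced (toCM X x₀ F) ContinuousMap.compactOpen

/-- The set `γ(U) = ⋃ₙ (U₀ ∩ B + U₁ ∩ 2B + ⋯ + Uₙ ∩ 2ⁿB)` from the definition of the
mixed topology, where `B` is the closed unit ball of `Lip₀(X, F)`. -/
def gammaSet (U : ℕ → Set (lip0 X x₀ F)) : Set (lip0 X x₀ F) :=
  ⋃ n : ℕ, ∑ i ∈ Finset.range (n + 1), (U i ∩ {f | ‖f‖ ≤ 2 ^ i})

/-- The mixed topology `τ_γ = γ[Lip, τ₀]` on `Lip₀(X, F)`: the topology whose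
neighborhoods of a point `f` are generated by the translates by `f` of the sets `γ(U)`,
where `U` runs over all sequences of convex balanced `τ₀`-neighborhoods of zero. -/
def tauGamma : TopologicalSpace (lip0 X x₀ F) :=
  TopologicalSpace.mkOfNhds fun f =>
    ⨅ (U : ℕ → Set (lip0 X x₀ F))
      (_ : ∀ n, U n ∈ @nhds _ (tau0 X x₀ F) 0 ∧ Convex ℝ (U n) ∧ Balanced ℝ (U n)),
      Filter.principal ((f + ·) '' gammaSet X x₀ F U)

/-- A subset of `Lip₀(X, F)` is norm bounded if the Lipschitz norms of its members are
uniformly bounded. -/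
def NormBounded (B : Set (lip0 X x₀ F)) : Prop :=
  ∃ C : ℝ, ∀ f ∈ B, ‖f‖ ≤ C

/-- The locally convex topology `γτ_γ` on `Lip₀(X, F)`, generated by the seminorms
`f ↦ sup_n αₙ ‖f xₙ - f yₙ‖ / d(xₙ, yₙ)` where `(αₙ)` is a sequence of positive reals
tending to zero and `((xₙ, yₙ))` is a sequence of pairs of distinct points of `X`. -/
def gammaTauGamma : TopologicalSpace (lip0 X x₀ F) :=
  ⨅ (α : ℕ → ℝ) (z : ℕ → X × X)
    (_ : (∀ n, 0 < α n) ∧ Filter.Tendsto α Filter.atTop (nhds 0) ∧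
      ∀ n, (z n).1 ≠ (z n).2),
    TopologicalSpace.induced
      (fun f => UniformFun.ofFun fun n =>
        (α n / dist (z n).1 (z n).2) • (toFun' f (z n).1 - toFun' f (z n).2))
      inferInstance

/-- Evaluation at a point of `X`, as a linear functional on `Lip₀(X)`. -/
def evalLM (x : X) : lip0 X x₀ ℝ →ₗ[ℝ] ℝ where
  toFun f := toFun' f x
  map_add' f g := rfl
  map_smul' c f := rfl

/-- Evaluation at a point of `X`, as a continuous linear functional on `Lip₀(X)`. -/
def evalCLM (x : X) : lip0 X x₀ ℝ →L[ℝ] ℝ :=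
  LinearMap.mkContinuous (evalLM X x₀ x) (dist x x₀)
    (fun f => by
      have h0 : toFun' f x₀ = 0 := apply_base f
      have h := norm_sub_le_lipNorm (x₀ := x₀) f x x₀
      rw [h0, sub_zero] at h
      calc ‖evalLM X x₀ x f‖ ≤ lipNorm X x₀ ℝ f * dist x x₀ := h
        _ = dist x x₀ * ‖f‖ := by rw [lip0_norm_def, mul_comm])

/-- The Lipschitz-free space `F(X)`: the closed linear span of the evaluation
functionals inside the dual of `Lip₀(X)`. -/
def freeSpace : Submodule ℝ (lip0 X x₀ ℝ →L[ℝ] ℝ) :=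
  (Submodule.span ℝ (Set.range (evalCLM X x₀))).topologicalClosure

/-- The Dirac map `δ : X → F(X)`. -/
def deltaF (x : X) : freeSpace X x₀ :=
  ⟨evalCLM X x₀ x,
    Submodule.le_topologicalClosure _ (Submodule.subset_span (Set.mem_range_self x))⟩

/-- For a normed space `G`, the topology on the dual `G'` of uniform convergence on the
convex balanced compact subsets of `G` (the topology of `G'_c`). -/
def dualcTop (G : Type*) [NormedAddCommGroup G] [NormedSpace ℝ G] :
    TopologicalSpace (G →L[ℝ] ℝ) :=
  TopologicalSpace.induced
    (fun φ => UniformOnFun.ofFun {L : Set G | IsCompact L ∧ Convex ℝ L ∧ Balanced ℝ L} ⇑φ)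
    inferInstance


section StmtTwoAux

variable {X : Type*} [MetricSpace X] {x₀ : X}
variable {F : Type*} [NormedAddCommGroup F] [NormedSpace ℝ F]

lemma sum_sets_subset {ι M : Type*} [AddCommMonoid M] (s : Finset ι) {S T : ι → Set M}
    (h : ∀ i ∈ s, S i ⊆ T i) : ∑ i ∈ s, S i ⊆ ∑ i ∈ s, T i := by
  classical
  induction s using Finset.induction_on with
  | empty => simp
  | @insert a s ha ih =>
    rw [Finset.sum_insert ha, Finset.sum_insert ha]
    exact Set.add_subset_add (h a (Finset.mem_insert_self a s))
      (ih fun i hi => h i (Finset.mem_insert_of_mem hi))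

lemma zero_mem_sum_sets {ι M : Type*} [AddCommMonoid M] (s : Finset ι) {S : ι → Set M}
    (h : ∀ i ∈ s, (0 : M) ∈ S i) : (0 : M) ∈ ∑ i ∈ s, S i := by
  classical
  induction s using Finset.induction_on with
  | empty => simp
  | @insert a s ha ih =>
    rw [Finset.sum_insert ha]
    have := Set.add_mem_add (h a (Finset.mem_insert_self a s))
      (ih fun i hi => h i (Finset.mem_insert_of_mem hi))
    simpa using this

lemma gammaSet_mono {U V : ℕ → Set (lip0 X x₀ F)} (h : ∀ n, U n ⊆ V n) :
    gammaSet X x₀ F U ⊆ gammaSet X x₀ F V :=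
  Set.iUnion_mono fun n => sum_sets_subset _ fun i _ =>
    Set.inter_subset_inter (h i) Set.Subset.rfl

lemma mem_of_mem_tau0 {s : Set (lip0 X x₀ F)} (h : s ∈ @nhds _ (tau0 X x₀ F) 0) :
    (0 : lip0 X x₀ F) ∈ s := by
  letI := tau0 X x₀ F
  exact mem_of_mem_nhds h

lemma zero_mem_gammaPiece {U : ℕ → Set (lip0 X x₀ F)}
    (hU : ∀ n, U n ∈ @nhds _ (tau0 X x₀ F) 0) (i : ℕ) :
    (0 : lip0 X x₀ F) ∈ U i ∩ {f | ‖f‖ ≤ 2 ^ i} :=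
  ⟨mem_of_mem_tau0 (hU i), by simp only [Set.mem_setOf_eq, norm_zero]; positivity⟩

lemma mem_gammaSet_of_single {U : ℕ → Set (lip0 X x₀ F)}
    (hU : ∀ n, U n ∈ @nhds _ (tau0 X x₀ F) 0) {g : lip0 X x₀ F} {m : ℕ}
    (hg : g ∈ U m) (hgn : ‖g‖ ≤ 2 ^ m) : g ∈ gammaSet X x₀ F U := by
  refine Set.mem_iUnion.2 ⟨m, ?_⟩
  rw [Finset.sum_range_succ]
  have h0 : (0 : lip0 X x₀ F) ∈ ∑ i ∈ Finset.range m, (U i ∩ {f | ‖f‖ ≤ 2 ^ i}) :=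
    zero_mem_sum_sets _ fun i _ => zero_mem_gammaPiece hU i
  have hmem : g ∈ U m ∩ {f | ‖f‖ ≤ 2 ^ m} := ⟨hg, hgn⟩
  have := Set.add_mem_add h0 hmem
  simpa using this

lemma zero_mem_gammaSet {U : ℕ → Set (lip0 X x₀ F)}
    (hU : ∀ n, U n ∈ @nhds _ (tau0 X x₀ F) 0) : (0 : lip0 X x₀ F) ∈ gammaSet X x₀ F U :=
  mem_gammaSet_of_single hU (mem_of_mem_tau0 (hU 0)) (by simp)

lemma nhds_tauGamma_eq (a : lip0 X x₀ F) :
    @nhds _ (tauGamma X x₀ F) a =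
      ⨅ (U : ℕ → Set (lip0 X x₀ F))
        (_ : ∀ n, U n ∈ @nhds _ (tau0 X x₀ F) 0 ∧ Convex ℝ (U n) ∧ Balanced ℝ (U n)),
        Filter.principal ((a + ·) '' gammaSet X x₀ F U) := by
  refine TopologicalSpace.nhds_mkOfNhds _ a ?_ ?_
  · intro b
    simp only [le_iInf_iff, Filter.le_principal_iff, Filter.mem_pure]
    intro U hU
    exact ⟨0, zero_mem_gammaSet fun n => (hU n).1, add_zero b⟩
  · intro b s hs
    -- extract a single U from the infimum
    rw [iInf_subtype'] at hs
    haveI : Nonempty {U : ℕ → Set (lip0 X x₀ F) //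
        ∀ n, U n ∈ @nhds _ (tau0 X x₀ F) 0 ∧ Convex ℝ (U n) ∧ Balanced ℝ (U n)} :=
      ⟨⟨fun _ => Set.univ, fun _ => ⟨Filter.univ_mem, convex_univ, balanced_univ⟩⟩⟩
    have hdir : Directed (· ≥ ·) fun p : {U : ℕ → Set (lip0 X x₀ F) //
        ∀ n, U n ∈ @nhds _ (tau0 X x₀ F) 0 ∧ Convex ℝ (U n) ∧ Balanced ℝ (U n)} =>
        Filter.principal ((b + ·) '' gammaSet X x₀ F p.1) := by
      rintro ⟨U, hU⟩ ⟨V, hV⟩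
      refine ⟨⟨fun n => U n ∩ V n, fun n =>
        ⟨Filter.inter_mem (hU n).1 (hV n).1, (hU n).2.1.inter (hV n).2.1,
          (hU n).2.2.inter (hV n).2.2⟩⟩, ?_, ?_⟩
      · exact Filter.principal_mono.2 (Set.image_mono
          (gammaSet_mono fun n => Set.inter_subset_left))
      · exact Filter.principal_mono.2 (Set.image_mono
          (gammaSet_mono fun n => Set.inter_subset_right))
    rw [Filter.mem_iInf_of_directed hdir] at hs
    obtain ⟨⟨U, hU⟩, hsU⟩ := hs
    rw [Filter.mem_principal] at hsU
    have hmem : (b + ·) '' gammaSet X x₀ F U ∈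
        ⨅ (U : ℕ → Set (lip0 X x₀ F))
          (_ : ∀ n, U n ∈ @nhds _ (tau0 X x₀ F) 0 ∧ Convex ℝ (U n) ∧ Balanced ℝ (U n)),
          Filter.principal ((b + ·) '' gammaSet X x₀ F U) :=
      Filter.mem_iInf_of_mem U (Filter.mem_iInf_of_mem hU (Filter.mem_principal_self _))
    refine Filter.mem_of_superset hmem ?_
    rintro y ⟨g, hg, rfl⟩
    obtain ⟨m, hgm⟩ := Set.mem_iUnion.1 hg
    have hU' : ∀ n, U (m + 1 + n) ∈ @nhds _ (tau0 X x₀ F) 0 ∧ Convex ℝ (U (m + 1 + n)) ∧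
        Balanced ℝ (U (m + 1 + n)) := fun n => hU (m + 1 + n)
    apply Filter.mem_iInf_of_mem (fun i => U (m + 1 + i))
    apply Filter.mem_iInf_of_mem hU'
    rw [Filter.mem_principal]
    refine Set.Subset.trans ?_ hsU
    rintro _ ⟨h, hh, rfl⟩
    obtain ⟨l, hl⟩ := Set.mem_iUnion.1 hh
    have h2 : h ∈ ∑ i ∈ Finset.range (l + 1),
        (U (m + 1 + i) ∩ {f : lip0 X x₀ F | ‖f‖ ≤ 2 ^ (m + 1 + i)}) := by
      refine sum_sets_subset _ (fun i _ => ?_) hl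
      refine Set.inter_subset_inter Set.Subset.rfl fun f hf => ?_
      simp only [Set.mem_setOf_eq] at hf ⊢
      exact le_trans hf (pow_le_pow_right₀ one_le_two (by omega))
    have h3 := Set.add_mem_add hgm h2
    rw [← Finset.sum_range_add] at h3
    refine ⟨g + h, ?_, (add_assoc b g h).symm⟩
    refine Set.mem_iUnion.2 ⟨m + l + 1, ?_⟩
    have hnum : m + l + 1 + 1 = m + 1 + (l + 1) := by omega
    rw [hnum]
    exact h3

lemma tendsto_tauGamma_zero_iff (f : ℕ → lip0 X x₀ F) :
    Filter.Tendsto f Filter.atTop (@nhds _ (tauGamma X x₀ F) 0) ↔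
      ∀ U : ℕ → Set (lip0 X x₀ F),
        (∀ n, U n ∈ @nhds _ (tau0 X x₀ F) 0 ∧ Convex ℝ (U n) ∧ Balanced ℝ (U n)) →
        ∀ᶠ n in Filter.atTop, f n ∈ gammaSet X x₀ F U := by
  rw [nhds_tauGamma_eq, Filter.tendsto_iInf]
  refine forall_congr' fun U => ?_
  rw [Filter.tendsto_iInf]
  refine forall_congr' fun hU => ?_
  rw [Filter.tendsto_principal]
  simp only [zero_add, Set.image_id']

lemma basic_mem_nhds_tau0 {K : Set X} (hK : IsCompact K) {ε : ℝ} (hε : 0 < ε) :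
    {g : lip0 X x₀ F | ∀ x ∈ K, ‖toFun' g x‖ < ε} ∈ @nhds _ (tau0 X x₀ F) 0 := by
  rw [show tau0 X x₀ F = TopologicalSpace.induced (toCM X x₀ F)
    ContinuousMap.compactOpen from rfl, mem_nhds_induced]
  refine ⟨{h : C(X, F) | Set.MapsTo h K (Metric.ball 0 ε)}, ?_, ?_⟩
  · refine (ContinuousMap.isOpen_setOf_mapsTo hK Metric.isOpen_ball).mem_nhds ?_
    intro x _
    show toFun' (0 : lip0 X x₀ F) x ∈ Metric.ball (0 : F) ε
    rw [toFun'_zero]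
    simpa using hε
  · intro g hg x hx
    have := hg hx
    rwa [mem_ball_zero_iff] at this

lemma basic_convex {K : Set X} {ε : ℝ} :
    Convex ℝ {g : lip0 X x₀ F | ∀ x ∈ K, ‖toFun' g x‖ < ε} := by
  intro g hg h hh a b ha hb hab
  intro x hx
  have h1 : toFun' (a • g + b • h) x = a • toFun' g x + b • toFun' h x := rfl
  show ‖toFun' (a • g + b • h) x‖ < ε
  rw [h1]
  obtain ha' | rfl := ha.lt_or_eq
  · calc ‖a • toFun' g x + b • toFun' h x‖
        ≤ a * ‖toFun' g x‖ + b * ‖toFun' h x‖ := by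
          refine (norm_add_le _ _).trans ?_
          rw [norm_smul, norm_smul, Real.norm_eq_abs, Real.norm_eq_abs,
            abs_of_nonneg ha, abs_of_nonneg hb]
      _ < a * ε + b * ε :=
          add_lt_add_of_lt_of_le (mul_lt_mul_of_pos_left (hg x hx) ha')
            (mul_le_mul_of_nonneg_left (hh x hx).le hb)
      _ = ε := by rw [← add_mul, hab, one_mul]
  · have hb1 : b = 1 := by linarith
    simp only [zero_smul, zero_add, hb1, one_smul]
    exact hh x hx

lemma basic_balanced {K : Set X} {ε : ℝ} :
    Balanced ℝ {g : lip0 X x₀ F | ∀ x ∈ K, ‖toFun' g x‖ < ε} := by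
  intro c hc
  rintro y ⟨g, hg, rfl⟩
  intro x hx
  show ‖toFun' (c • g) x‖ < ε
  have h1 : toFun' (c • g) x = c • toFun' g x := rfl
  rw [h1, norm_smul]
  calc ‖c‖ * ‖toFun' g x‖ ≤ 1 * ‖toFun' g x‖ :=
        mul_le_mul_of_nonneg_right hc (norm_nonneg _)
    _ = ‖toFun' g x‖ := one_mul _
    _ < ε := hg x hx

lemma toFun'_finsetSum {ι : Type*} (s : Finset ι) (c : ι → lip0 X x₀ F) (x : X) :
    toFun' (∑ i ∈ s, c i) x = ∑ i ∈ s, toFun' (c i) x := by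
  classical
  induction s using Finset.induction_on with
  | empty => rfl
  | @insert a s ha ih =>
    rw [Finset.sum_insert ha, Finset.sum_insert ha, ← ih]
    rfl

end StmtTwoAux

lemma sum_bound (k M : ℕ) (d : ℝ) (hd : 0 ≤ d) :
    ∑ i ∈ Finset.range M,
      (if i < k then (2:ℝ)^i * d else (2:ℝ)^(2*k) * (1/2)^(i+1) * d) ≤ 2^(k+1) * d := by
  have hgeom : ∀ m : ℕ, ∑ i ∈ Finset.range m, (2:ℝ)^i ≤ 2^m := by
    intro m
    rw [geom_sum_eq (by norm_num : (2:ℝ) ≠ 1) m,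
      show (2:ℝ) - 1 = 1 by norm_num, div_one]
    have : (0:ℝ) ≤ 2^m := by positivity
    linarith
  have hhalf : (2:ℝ)^(2*k) * (1/2)^k = 2^k := by
    rw [two_mul, pow_add, one_div, inv_pow]
    field_simp
  rcases le_or_gt M k with hMk | hkM
  · have he : ∀ i ∈ Finset.range M,
        (if i < k then (2:ℝ)^i * d else (2:ℝ)^(2*k) * (1/2)^(i+1) * d) = 2^i * d :=
      fun i hi => if_pos (lt_of_lt_of_le (Finset.mem_range.1 hi) hMk)
    rw [Finset.sum_congr rfl he, ← Finset.sum_mul]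
    have h1 := hgeom M
    have h2 : (2:ℝ)^M ≤ 2^(k+1) := pow_le_pow_right₀ one_le_two (by omega)
    nlinarith
  · rw [Finset.range_eq_Ico, ← Finset.sum_Ico_consecutive _ (Nat.zero_le k) hkM.le]
    have e1 : ∑ i ∈ Finset.Ico 0 k,
        (if i < k then (2:ℝ)^i * d else (2:ℝ)^(2*k) * (1/2)^(i+1) * d)
        = ∑ i ∈ Finset.range k, (2:ℝ)^i * d := by
      rw [← Nat.Ico_zero_eq_range]
      exact Finset.sum_congr rfl fun i hi => if_pos (Finset.mem_Ico.1 hi).2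
    have e2 : ∑ i ∈ Finset.Ico k M,
        (if i < k then (2:ℝ)^i * d else (2:ℝ)^(2*k) * (1/2)^(i+1) * d)
        = ∑ i ∈ Finset.Ico k M, (2:ℝ)^(2*k) * (1/2)^(i+1) * d :=
      Finset.sum_congr rfl fun i hi => if_neg (not_lt.2 (Finset.mem_Ico.1 hi).1)
    rw [e1, e2]
    have b1 : ∑ i ∈ Finset.range k, (2:ℝ)^i * d ≤ 2^k * d := by
      rw [← Finset.sum_mul]
      exact mul_le_mul_of_nonneg_right (hgeom k) hd
    have b2 : ∑ i ∈ Finset.Ico k M, (2:ℝ)^(2*k) * (1/2)^(i+1) * d ≤ 2^k * d := by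
      rw [Finset.sum_Ico_eq_sum_range]
      have he : ∀ j ∈ Finset.range (M - k),
          (2:ℝ)^(2*k) * (1/2)^(k+j+1) * d = ((2:ℝ)^(2*k) * (1/2)^(k+1) * d) * (1/(2:ℝ))^j := by
        intro j _
        rw [show k + j + 1 = (k+1) + j by omega, pow_add]
        ring
      rw [Finset.sum_congr rfl he, ← Finset.mul_sum]
      have hs := sum_geometric_two_le (M - k)
      have hco : (0:ℝ) ≤ (2:ℝ)^(2*k) * (1/2)^(k+1) * d := by positivity
      calc ((2:ℝ)^(2*k) * (1/2)^(k+1) * d) * ∑ j ∈ Finset.range (M-k), (1/(2:ℝ))^j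
          ≤ ((2:ℝ)^(2*k) * (1/2)^(k+1) * d) * 2 := mul_le_mul_of_nonneg_left hs hco
        _ = (2:ℝ)^(2*k) * (1/2)^k * d := by rw [pow_succ]; ring
        _ = 2^k * d := by rw [hhalf]
    calc ∑ i ∈ Finset.range k, (2:ℝ)^i * d
          + ∑ i ∈ Finset.Ico k M, (2:ℝ)^(2*k) * (1/2)^(i+1) * d
        ≤ 2^k * d + 2^k * d := add_le_add b1 b2
      _ = 2^(k+1) * d := by rw [pow_succ]; ring


theorem stmt2 (X : Type*) [MetricSpace X] (x₀ : X) (f : ℕ → lip0 X x₀ ℝ) :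
    Filter.Tendsto f Filter.atTop (@nhds _ (tauGamma X x₀ ℝ) 0) ↔
      (∃ C : ℝ, ∀ n, ‖f n‖ ≤ C) ∧
        Filter.Tendsto f Filter.atTop (@nhds _ (tau0 X x₀ ℝ) 0) := by
  rw [tendsto_tauGamma_zero_iff]
  constructor
  · intro H
    constructor
    · -- norm boundedness
      by_contra hb
      push_neg at hb
      have hbig : ∀ (C : ℝ) (N : ℕ), ∃ n, N ≤ n ∧ C < ‖f n‖ := by
        intro C N
        obtain ⟨n, hn⟩ := hb (max C (∑ m ∈ Finset.range N, ‖f m‖))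
        refine ⟨n, ?_, lt_of_le_of_lt (le_max_left _ _) hn⟩
        by_contra hlt
        push_neg at hlt
        have h1 : ‖f n‖ ≤ ∑ m ∈ Finset.range N, ‖f m‖ :=
          Finset.single_le_sum (fun m _ => norm_nonneg (f m)) (Finset.mem_range.2 hlt)
        have h2 := lt_of_le_of_lt (le_max_right C _) hn
        linarith
      choose g hg1 hg2 using hbig
      obtain ⟨nn, hmono, hnorm⟩ : ∃ nn : ℕ → ℕ, StrictMono nn ∧
          ∀ k, (2:ℝ)^(k+2) < ‖f (nn k)‖ := by
        refine ⟨fun k => Nat.rec (g (2^2) 0) (fun k ih => g (2^(k+3)) (ih+1)) k, ?_, ?_⟩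
        · apply strictMono_nat_of_lt_succ
          intro k
          exact lt_of_lt_of_le (Nat.lt_succ_self _) (hg1 (2^(k+3)) _)
        · intro k
          cases k with
          | zero => exact hg2 (2^2) 0
          | succ k => exact hg2 (2^(k+3)) _
      haveI : Nonempty (X × X) := nonempty_pairs x₀
      have hpair : ∀ k, ∃ q : X × X,
          (2:ℝ)^(k+2) < ‖toFun' (f (nn k)) q.1 - toFun' (f (nn k)) q.2‖ / dist q.1 q.2 := by
        intro k
        have h := hnorm k
        rw [lip0_norm_def, lipNorm] at h
        exact (lt_ciSup_iff (bddAbove_ratio _)).1 h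
      choose p hp using hpair
      have hdpos : ∀ k, 0 < dist (p k).1 (p k).2 := by
        intro k
        rcases (dist_nonneg : (0:ℝ) ≤ dist (p k).1 (p k).2).lt_or_eq with h | h
        · exact h
        · exfalso
          have h2 := hp k
          rw [← h, div_zero] at h2
          have : (0:ℝ) < 2^(k+2) := by positivity
          linarith
      have hDelta : ∀ k, (2:ℝ)^(k+2) * dist (p k).1 (p k).2 <
          ‖toFun' (f (nn k)) (p k).1 - toFun' (f (nn k)) (p k).2‖ :=
        fun k => (lt_div_iff₀ (hdpos k)).1 (hp k)
      obtain ⟨δ, hδpos, hδle⟩ : ∃ δ : ℕ → ℝ, (∀ i, 0 < δ i) ∧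
          ∀ k i, k ≤ i → δ i ≤ (2:ℝ)^(2*k) * (1/2)^(i+1) * dist (p k).1 (p k).2 := by
        refine ⟨fun i => (Finset.range (i+1)).inf'
          (Finset.nonempty_range_iff.2 (Nat.succ_ne_zero i))
          (fun k => (2:ℝ)^(2*k) * (1/2)^(i+1) * dist (p k).1 (p k).2),
          fun i => ?_, fun k i hk => ?_⟩
        · rw [Finset.lt_inf'_iff]
          intro k _
          have := hdpos k
          positivity
        · exact Finset.inf'_le _ (Finset.mem_range.2 (Nat.lt_succ_of_le hk))
      classical
      obtain ⟨Kf, hKf⟩ : ∃ Kf : ℕ → Finset X, ∀ i k, k ≤ i →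
          ((p k).1 ∈ (Kf i : Set X)) ∧ ((p k).2 ∈ (Kf i : Set X)) := by
        refine ⟨fun i => ((Finset.range (i+1)).image fun k => (p k).1) ∪
          ((Finset.range (i+1)).image fun k => (p k).2), fun i k hk => ?_⟩
        constructor
        · rw [Finset.coe_union]
          exact Or.inl (by
            rw [Finset.coe_image]
            exact ⟨k, by simpa using Nat.lt_succ_of_le hk, rfl⟩)
        · rw [Finset.coe_union]
          exact Or.inr (by
            rw [Finset.coe_image]
            exact ⟨k, by simpa using Nat.lt_succ_of_le hk, rfl⟩)
      set U : ℕ → Set (lip0 X x₀ ℝ) :=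
        fun i => {g : lip0 X x₀ ℝ | ∀ x ∈ (Kf i : Set X), ‖toFun' g x‖ < δ i / 2} with hUdef
      have hadm : ∀ i, U i ∈ @nhds _ (tau0 X x₀ ℝ) 0 ∧ Convex ℝ (U i) ∧ Balanced ℝ (U i) := by
        intro i
        refine ⟨basic_mem_nhds_tau0 (Kf i).finite_toSet.isCompact ?_, basic_convex,
          basic_balanced⟩
        have := hδpos i
        positivity
      obtain ⟨M, hM⟩ := Filter.eventually_atTop.1 (H U hadm)
      have hmem : f (nn M) ∈ gammaSet X x₀ ℝ U := hM (nn M) hmono.le_apply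
      -- estimate
      obtain ⟨N, hN⟩ := Set.mem_iUnion.1 hmem
      obtain ⟨c, hc, hsum⟩ := (Set.mem_finset_sum _ _ _).1 hN
      have hDecomp : toFun' (f (nn M)) (p M).1 - toFun' (f (nn M)) (p M).2 =
          ∑ i ∈ Finset.range (N+1), (toFun' (c i) (p M).1 - toFun' (c i) (p M).2) := by
        rw [← hsum, toFun'_finsetSum, toFun'_finsetSum, Finset.sum_sub_distrib]
      have hterm : ∀ i ∈ Finset.range (N+1),
          ‖toFun' (c i) (p M).1 - toFun' (c i) (p M).2‖ ≤
            (if i < M then (2:ℝ)^i * dist (p M).1 (p M).2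
             else (2:ℝ)^(2*M) * (1/2)^(i+1) * dist (p M).1 (p M).2) := by
        intro i hi
        by_cases hik : i < M
        · rw [if_pos hik]
          have hb2 := (hc hi).2
          simp only [Set.mem_setOf_eq] at hb2
          calc ‖toFun' (c i) (p M).1 - toFun' (c i) (p M).2‖
              ≤ lipNorm X x₀ ℝ (c i) * dist (p M).1 (p M).2 := norm_sub_le_lipNorm _ _ _
            _ ≤ 2^i * dist (p M).1 (p M).2 := mul_le_mul_of_nonneg_right hb2 dist_nonneg
        · rw [if_neg hik]
          push_neg at hik
          have hU1 := (hc hi).1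
          simp only [hUdef, Set.mem_setOf_eq] at hU1
          have e1 := hU1 _ (hKf i M hik).1
          have e2 := hU1 _ (hKf i M hik).2
          calc ‖toFun' (c i) (p M).1 - toFun' (c i) (p M).2‖
              ≤ ‖toFun' (c i) (p M).1‖ + ‖toFun' (c i) (p M).2‖ := norm_sub_le _ _
            _ ≤ δ i / 2 + δ i / 2 := add_le_add e1.le e2.le
            _ = δ i := by ring
            _ ≤ (2:ℝ)^(2*M) * (1/2)^(i+1) * dist (p M).1 (p M).2 := hδle M i hik
      have h1 : ‖toFun' (f (nn M)) (p M).1 - toFun' (f (nn M)) (p M).2‖ ≤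
          2^(M+1) * dist (p M).1 (p M).2 := by
        rw [hDecomp]
        calc ‖∑ i ∈ Finset.range (N+1), (toFun' (c i) (p M).1 - toFun' (c i) (p M).2)‖
            ≤ ∑ i ∈ Finset.range (N+1), ‖toFun' (c i) (p M).1 - toFun' (c i) (p M).2‖ :=
              norm_sum_le _ _
          _ ≤ ∑ i ∈ Finset.range (N+1),
              (if i < M then (2:ℝ)^i * dist (p M).1 (p M).2
               else (2:ℝ)^(2*M) * (1/2)^(i+1) * dist (p M).1 (p M).2) :=
              Finset.sum_le_sum hterm
          _ ≤ 2^(M+1) * dist (p M).1 (p M).2 := sum_bound M (N+1) _ dist_nonneg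
      have h2 := hDelta M
      have h5 : 2 * ((2:ℝ)^(M+1) * dist (p M).1 (p M).2) <
          (2:ℝ)^(M+1) * dist (p M).1 (p M).2 := by
        calc 2 * ((2:ℝ)^(M+1) * dist (p M).1 (p M).2)
            = 2^(M+2) * dist (p M).1 (p M).2 := by ring
          _ < ‖toFun' (f (nn M)) (p M).1 - toFun' (f (nn M)) (p M).2‖ := h2
          _ ≤ 2^(M+1) * dist (p M).1 (p M).2 := h1
      have h4 : (0:ℝ) < 2^(M+1) * dist (p M).1 (p M).2 :=
        mul_pos (by positivity) (hdpos M)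
      linarith
    · -- convergence in tau0
      have key : ∀ (K : Set X), IsCompact K → ∀ ε : ℝ, 0 < ε →
          ∀ᶠ n in Filter.atTop, ∀ x ∈ K, ‖toFun' (f n) x‖ < ε := by
        intro K hK ε hε
        have hadm : ∀ i, (fun i => {g : lip0 X x₀ ℝ | ∀ x ∈ K,
              ‖toFun' g x‖ < ε/4 * (1/2)^i}) i ∈ @nhds _ (tau0 X x₀ ℝ) 0 ∧
            Convex ℝ ((fun i => {g : lip0 X x₀ ℝ | ∀ x ∈ K,
              ‖toFun' g x‖ < ε/4 * (1/2)^i}) i) ∧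
            Balanced ℝ ((fun i => {g : lip0 X x₀ ℝ | ∀ x ∈ K,
              ‖toFun' g x‖ < ε/4 * (1/2)^i}) i) :=
          fun i => ⟨basic_mem_nhds_tau0 hK (by positivity), basic_convex, basic_balanced⟩
        filter_upwards [H _ hadm] with n hn x hx
        obtain ⟨N, hN⟩ := Set.mem_iUnion.1 hn
        obtain ⟨c, hc, hsum⟩ := (Set.mem_finset_sum _ _ _).1 hN
        have hval : toFun' (f n) x = ∑ i ∈ Finset.range (N+1), toFun' (c i) x := by
          rw [← hsum, toFun'_finsetSum]
        rw [hval]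
        calc ‖∑ i ∈ Finset.range (N+1), toFun' (c i) x‖
            ≤ ∑ i ∈ Finset.range (N+1), ‖toFun' (c i) x‖ := norm_sum_le _ _
          _ ≤ ∑ i ∈ Finset.range (N+1), ε/4 * (1/(2:ℝ))^i := by
              refine Finset.sum_le_sum fun i hi => ?_
              have h1 := (hc hi).1
              simp only [Set.mem_setOf_eq] at h1
              have := h1 x hx
              rw [show (1/(2:ℝ))^i = (1/2:ℝ)^i by norm_num]
              exact this.le
          _ = ε/4 * ∑ i ∈ Finset.range (N+1), (1/(2:ℝ))^i := by rw [Finset.mul_sum]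
          _ ≤ ε/4 * 2 := mul_le_mul_of_nonneg_left (sum_geometric_two_le _) (by positivity)
          _ < ε := by linarith
      have hT : Filter.Tendsto (fun n => toCM X x₀ ℝ (f n)) Filter.atTop
          (nhds (toCM X x₀ ℝ 0)) := by
        rw [ContinuousMap.tendsto_iff_forall_isCompact_tendstoUniformlyOn]
        intro K hK
        rw [Metric.tendstoUniformlyOn_iff]
        intro ε hε
        filter_upwards [key K hK ε hε] with n hn x hx
        have hd : dist ((toCM X x₀ ℝ 0) x) ((toCM X x₀ ℝ (f n)) x) = ‖toFun' (f n) x‖ := by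
          show dist (toFun' (0 : lip0 X x₀ ℝ) x) (toFun' (f n) x) = _
          rw [toFun'_zero]
          simp [Real.dist_eq, Real.norm_eq_abs, abs_sub_comm]
        rw [hd]
        exact hn x hx
      rw [show tau0 X x₀ ℝ = TopologicalSpace.induced (toCM X x₀ ℝ)
        ContinuousMap.compactOpen from rfl, nhds_induced]
      exact Filter.tendsto_comap_iff.2 hT
  · rintro ⟨⟨C, hC⟩, hconv⟩
    intro U hU
    obtain ⟨m, hm⟩ := pow_unbounded_of_one_lt C (one_lt_two)
    have hUm : ∀ᶠ n in Filter.atTop, f n ∈ U m := by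
      have h := Filter.le_def.1 hconv _ ((hU m).1)
      rw [Filter.mem_map] at h
      exact h
    filter_upwards [hUm] with n hn
    exact mem_gammaSet_of_single (fun i => (hU i).1) hn ((hC n).trans hm.le)


end LipApprox
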